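/- Let f be a concave function on [0,1] with f(0) = 0 and f(1) = 1, admitting a right derivative at 0 and a left derivative at 1. Then ∫_0^1 |f - id| dμ ≤ (1/2)·((f'_r(0) - 1)(1 - f'_l(1)))/(f'_r(0) - f'_l(1)), with the convention 0/0 = 1 when f is affine. -/

import Mathlib

open Set Filter intervalIntegral

theorem stmt9 (f : ℝ → ℝ)
    (hconc : ConcaveOn ℝ (Set.Icc 0 1) f)
    (hcont : ContinuousOn f (Set.Icc 0 1))
    (h0 : f 0 = 0) (h1 : f 1 = 1)
    (d0 d1 : ℝ)
    (hd0 : HasDerivWithinAt f d0 (Set.Ici 0) 0)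
    (hd1 : HasDerivWithinAt f d1 (Set.Iic 1) 1) :
    ∫ x in (0:ℝ)..1, |f x - x| ≤ (1 / 2) * ((d0 - 1) * (1 - d1) / (d0 - d1)) := by
  have h0m : (0:ℝ) ∈ Icc (0:ℝ) 1 := by norm_num
  have h1m : (1:ℝ) ∈ Icc (0:ℝ) 1 := by norm_num
  have hcvx : ConvexOn ℝ (Icc (0:ℝ) 1) (-f) := hconc.neg
  -- chord: x ≤ f x on [0,1]
  have hchord : ∀ x ∈ Icc (0:ℝ) 1, x ≤ f x := by
    intro x hx
    obtain ⟨hx0, hx1⟩ := hx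
    have := hconc.2 h0m h1m (show (0:ℝ) ≤ 1 - x by linarith) hx0 (by ring)
    simpa [h0, h1] using this
  -- secant antitone for concave f
  have hsec : ∀ a x y : ℝ, a ∈ Icc (0:ℝ) 1 → x ∈ Icc (0:ℝ) 1 → y ∈ Icc (0:ℝ) 1 →
      x ≠ a → y ≠ a → x ≤ y → (f y - f a) / (y - a) ≤ (f x - f a) / (x - a) := by
    intro a x y ha hx hy hxa hya hxy
    have h2 := hcvx.secant_mono ha hx hy hxa hya hxy
    simp only [Pi.neg_apply, neg_sub_neg] at h2
    have h3 := neg_le_neg h2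
    rwa [← neg_div, ← neg_div, neg_sub, neg_sub] at h3
  -- tangent at 0 : f x ≤ d0 * x on [0,1]
  have hslope0 : Tendsto (slope f 0) (nhdsWithin 0 (Ioi (0:ℝ))) (nhds d0) := by
    have := hasDerivWithinAt_iff_tendsto_slope.mp hd0
    rwa [Set.Ici_sdiff_left] at this
  have htan0 : ∀ x ∈ Icc (0:ℝ) 1, f x ≤ d0 * x := by
    intro x hx
    rcases eq_or_lt_of_le hx.1 with h | h
    · simp [← h, h0]
    · have key : slope f 0 x ≤ d0 := by
        refine ge_of_tendsto hslope0 ?_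
        filter_upwards [Ioo_mem_nhdsGT h] with y hy
        simpa [slope_def_field] using
          hsec 0 y x h0m ⟨hy.1.le, hy.2.le.trans hx.2⟩ hx (ne_of_gt hy.1) (ne_of_gt h) hy.2.le
      rw [slope_def_field, h0, sub_zero, sub_zero, div_le_iff₀ h] at key
      linarith
  -- tangent at 1 : f x ≤ 1 + d1 * (x - 1) on [0,1]
  have hslope1 : Tendsto (slope f 1) (nhdsWithin 1 (Iio (1:ℝ))) (nhds d1) := by
    have := hasDerivWithinAt_iff_tendsto_slope.mp hd1
    rwa [Set.Iic_diff_right] at this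
  have htan1 : ∀ x ∈ Icc (0:ℝ) 1, f x ≤ 1 + d1 * (x - 1) := by
    intro x hx
    rcases eq_or_lt_of_le hx.2 with h | h
    · simp [h, h1]
    · have key : d1 ≤ slope f 1 x := by
        refine le_of_tendsto hslope1 ?_
        filter_upwards [Ioo_mem_nhdsLT h] with y hy
        simpa [slope_def_field] using
          hsec 1 x y h1m hx ⟨hx.1.trans hy.1.le, hy.2.le⟩ (ne_of_lt h) (ne_of_lt hy.2) hy.1.le
      have hx1 : x - 1 < 0 := by linarith
      rw [slope_def_field, h1, le_div_iff_of_neg hx1] at key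
      linarith
  have hd0ge : 1 ≤ d0 := by have := htan0 1 h1m; rw [h1] at this; linarith
  have hd1le : d1 ≤ 1 := by have := htan1 0 h0m; rw [h0] at this; linarith
  have hrhs : 0 ≤ (1 / 2) * ((d0 - 1) * (1 - d1) / (d0 - d1)) := by
    apply mul_nonneg (by norm_num)
    apply div_nonneg (mul_nonneg (by linarith) (by linarith)) (by linarith)
  have huIcc : uIcc (0:ℝ) 1 = Icc 0 1 := uIcc_of_le zero_le_one
  rw [intervalIntegral.integral_congr
    (show EqOn (fun x => |f x - x|) (fun x => f x - x) (uIcc 0 1) by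
      rw [huIcc]; intro x hx; exact abs_of_nonneg (by linarith [hchord x hx]))]
  rcases eq_or_lt_of_le hd0ge with hdeg | hd0gt
  · have hfeq : EqOn (fun x => f x - x) (fun _ => (0:ℝ)) (uIcc (0:ℝ) 1) := by
      rw [huIcc]; intro x hx
      have ht := htan0 x hx; have hcd := hchord x hx
      rw [← hdeg, one_mul] at ht; simp only; linarith
    rw [intervalIntegral.integral_congr hfeq, intervalIntegral.integral_zero]
    exact hrhs
  rcases eq_or_lt_of_le hd1le with hdeg | hd1lt
  · have hfeq : EqOn (fun x => f x - x) (fun _ => (0:ℝ)) (uIcc (0:ℝ) 1) := by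
      rw [huIcc]; intro x hx
      have ht := htan1 x hx; have hcd := hchord x hx
      rw [hdeg, one_mul] at ht; simp only; linarith
    rw [intervalIntegral.integral_congr hfeq, intervalIntegral.integral_zero]
    exact hrhs
  set c : ℝ := (1 - d1) / (d0 - d1) with hc
  have hD : 0 < d0 - d1 := by linarith
  have hc0 : 0 < c := div_pos (by linarith) hD
  have hc1 : c < 1 := (div_lt_one hD).2 (by linarith)
  have hfi : IntervalIntegrable f MeasureTheory.volume 0 1 :=
    ContinuousOn.intervalIntegrable (by rwa [huIcc])
  have hg : IntervalIntegrable (fun x => f x - x) MeasureTheory.volume 0 1 :=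
    hfi.sub intervalIntegrable_id
  have hg1 : IntervalIntegrable (fun x => f x - x) MeasureTheory.volume 0 c :=
    hg.mono_set (by rw [huIcc, uIcc_of_le hc0.le]; exact Icc_subset_Icc le_rfl hc1.le)
  have hg2 : IntervalIntegrable (fun x => f x - x) MeasureTheory.volume c 1 :=
    hg.mono_set (by rw [huIcc, uIcc_of_le hc1.le]; exact Icc_subset_Icc hc0.le le_rfl)
  calc ∫ x in (0:ℝ)..1, (f x - x)
      = (∫ x in (0:ℝ)..c, (f x - x)) + ∫ x in c..1, (f x - x) :=
        (integral_add_adjacent_intervals hg1 hg2).symm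
    _ ≤ (∫ x in (0:ℝ)..c, ((d0 - 1) * x)) + ∫ x in c..1, ((1 - d1) * (1 - x)) := by
        apply add_le_add
        · apply integral_mono_on hc0.le hg1 ((continuous_const.mul continuous_id).intervalIntegrable 0 c)
          intro x hx
          have := htan0 x ⟨hx.1, hx.2.trans hc1.le⟩
          simp only [Pi.mul_apply, id_eq]; linarith
        · apply integral_mono_on hc1.le hg2 ((continuous_const.mul (continuous_const.sub continuous_id)).intervalIntegrable c 1)
          intro x hx
          have := htan1 x ⟨hc0.le.trans hx.1, hx.2⟩
          simp only [Pi.mul_apply, Pi.sub_apply, id_eq]; linarith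
    _ = (d0 - 1) * (c ^ 2 / 2) + (1 - d1) * ((1 - c) ^ 2 / 2) := by
        rw [integral_const_mul, integral_const_mul, integral_id,
          intervalIntegral.integral_sub intervalIntegrable_const intervalIntegrable_id,
          integral_const, integral_id]
        simp only [smul_eq_mul]
        ring
    _ = (1 / 2) * ((d0 - 1) * (1 - d1) / (d0 - d1)) := by
        rw [hc]; field_simp; ring
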